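/- Define the symmetric bilinear expression S(t¹,t²) = ∑_{{j_1,...,j_k}⊆J} D(j_1,...,j_k)² ∏_{l=1}^k a_{j_l}/(f_{j_l}(t¹) f_{j_l}(t²)), summing over unordered k-subsets of J. Then S(t,t) = (-1)^k det of the Hessian of ∑_j a_j log f_j at t. -/

import Mathlib

open Finset in
theorem cb_bij {k n : ℕ} (F : (Fin k → Fin n) → ℂ) :
    ∑ g ∈ Finset.univ.filter (fun g : Fin k → Fin n => Function.Injective g), F g
    = ∑ p ∈ (((Finset.univ : Finset (Fin n)).powersetCard k).attach ×ˢ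
        (Finset.univ : Finset (Equiv.Perm (Fin k)))),
        F (fun l => p.1.1.orderEmbOfFin ((Finset.mem_powersetCard.mp p.1.2).2) (p.2 l)) := by
  classical
  have hcongr : ∀ (s1 s2 : Finset (Fin n)) (h1 : s1.card = k) (h2 : s2.card = k), s1 = s2 →
      ∀ l, s1.orderEmbOfFin h1 l = s2.orderEmbOfFin h2 l := by
    rintro s1 s2 h1 h2 rfl l; rfl
  have himg : ∀ g : Fin k → Fin n, Function.Injective g →
      (Finset.image g Finset.univ).card = k := by
    intro g hg
    rw [Finset.card_image_of_injective _ hg, Finset.card_univ, Fintype.card_fin]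
  have hmem : ∀ g : Fin k → Fin n, Function.Injective g →
      Finset.image g Finset.univ ∈ (Finset.univ : Finset (Fin n)).powersetCard k := by
    intro g hg
    rw [Finset.mem_powersetCard]
    exact ⟨Finset.subset_univ _, himg g hg⟩
  -- construct the permutation
  have hgm : ∀ (g : Fin k → Fin n) (l : Fin k), g l ∈ Finset.image g Finset.univ := by
    intro g l; exact Finset.mem_image_of_mem g (Finset.mem_univ l)
  refine Finset.sum_bij' (i := fun g hg =>
      (⟨Finset.image g Finset.univ, hmem g ((Finset.mem_filter.mp hg).2)⟩,
        Equiv.ofBijective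
          (fun l => ((Finset.image g Finset.univ).orderIsoOfFin
              (himg g ((Finset.mem_filter.mp hg).2))).symm ⟨g l, hgm g l⟩)
          (Finite.injective_iff_bijective.mp (by
            intro l1 l2 h
            have := congrArg (fun x => (((Finset.image g Finset.univ).orderIsoOfFin
              (himg g ((Finset.mem_filter.mp hg).2))) x : Fin n)) h
            simp only [OrderIso.apply_symm_apply] at this
            exact ((Finset.mem_filter.mp hg).2) this))))
    (j := fun p hp => fun l => p.1.1.orderEmbOfFin ((Finset.mem_powersetCard.mp p.1.2).2) (p.2 l))
    ?_ ?_ ?_ ?_ ?_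
  · intro g hg
    exact Finset.mem_product.mpr ⟨Finset.mem_attach _ _, Finset.mem_univ _⟩
  · intro p hp
    simp only [Finset.mem_filter, Finset.mem_univ, true_and]
    exact (p.1.1.orderEmbOfFin _).injective.comp p.2.injective
  ·
    intro g hg
    funext l
    have hginj : Function.Injective g := by simpa using (Finset.mem_filter.mp hg).2
    show (Finset.image g Finset.univ).orderEmbOfFin _ _ = g l
    rw [← Finset.coe_orderIsoOfFin_apply]
    simp
  · -- right inverse : i (j p) = p
    intro p hp
    have hinj : Function.Injective
        (fun l => p.1.1.orderEmbOfFin ((Finset.mem_powersetCard.mp p.1.2).2) (p.2 l)) :=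
      (p.1.1.orderEmbOfFin _).injective.comp p.2.injective
    have himgeq : Finset.image
        (fun l => p.1.1.orderEmbOfFin ((Finset.mem_powersetCard.mp p.1.2).2) (p.2 l))
        Finset.univ = p.1.1 := by
      apply Finset.eq_of_subset_of_card_le
      · intro x hx
        simp only [Finset.mem_image] at hx
        obtain ⟨l, -, rfl⟩ := hx
        exact Finset.orderEmbOfFin_mem _ _ _
      · rw [himg _ hinj, (Finset.mem_powersetCard.mp p.1.2).2]
    refine Prod.ext (Subtype.ext himgeq) (Equiv.ext fun l => ?_)
    have := hcongr _ _ (himg _ hinj) ((Finset.mem_powersetCard.mp p.1.2).2) himgeq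
    apply (p.1.1.orderEmbOfFin ((Finset.mem_powersetCard.mp p.1.2).2)).injective
    rw [← this]
    rw [← Finset.coe_orderIsoOfFin_apply]
    simp
  · intro g hg
    congr 1
    funext l
    refine (?_ : _ = g l).symm
    show (Finset.image g Finset.univ).orderEmbOfFin _ _ = g l
    rw [← Finset.coe_orderIsoOfFin_apply]
    simp

theorem cb_expand {k n : ℕ} (c : Fin n → ℂ) (b : Fin n → Fin k → ℂ) :
    (Matrix.of fun i l : Fin k => ∑ j, c j * b j i * b j l).det
    = ∑ g : Fin k → Fin n, (∏ i, c (g i) * b (g i) i) * (Matrix.of fun i l => b (g i) l).det := by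
  have h : (Matrix.of fun i l : Fin k => ∑ j, c j * b j i * b j l)
      = fun i => ∑ j, (c j * b j i) • (b j) := by
    funext i l
    simp [mul_assoc, Finset.sum_apply]
  have hms := (Matrix.detRowAlternating (R := ℂ) (n := Fin k)).toMultilinearMap.map_sum
    (fun i (j : Fin n) => (c j * b j i) • (b j))
  rw [Matrix.det, h]
  refine hms.trans ?_
  congr 1
  funext g
  exact ((Matrix.detRowAlternating (R := ℂ) (n := Fin k)).toMultilinearMap.map_smul_univ
    (fun i => c (g i) * b (g i) i) (fun i => b (g i)))

theorem cb_inner {k n : ℕ} (c : Fin n → ℂ) (b : Fin n → Fin k → ℂ)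
    (s : Finset (Fin n)) (hs : s.card = k) :
    ∑ σ : Equiv.Perm (Fin k),
      (∏ i, c (s.orderEmbOfFin hs (σ i)) * b (s.orderEmbOfFin hs (σ i)) i) *
        (Matrix.of fun i l => b (s.orderEmbOfFin hs (σ i)) l).det
    = (Matrix.of fun i l : Fin k => b (s.orderEmbOfFin hs l) i).det ^ 2 *
        ∏ l, c (s.orderEmbOfFin hs l) := by
  set e := s.orderEmbOfFin hs with he
  set M : Matrix (Fin k) (Fin k) ℂ := Matrix.of fun i l => b (e i) l with hM
  have htrans : (Matrix.of fun i l : Fin k => b (e l) i) = M.transpose := by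
    funext i l; rfl
  have step : ∀ σ : Equiv.Perm (Fin k),
      (∏ i, c (e (σ i)) * b (e (σ i)) i) * (Matrix.of fun i l => b (e (σ i)) l).det
      = (∏ i, c (e i)) * M.det *
          (((Equiv.Perm.sign σ : ℤ) : ℂ) * ∏ i, M (σ i) i) := by
    intro σ
    have hperm : (Matrix.of fun i l => b (e (σ i)) l).det
        = ((Equiv.Perm.sign σ : ℤ) : ℂ) * M.det := by
      have := Matrix.det_permute σ M
      exact this
    rw [hperm, Finset.prod_mul_distrib]
    have hc : (∏ i, c (e (σ i))) = ∏ i, c (e i) := Equiv.prod_comp σ (fun i => c (e i))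
    have hb : (∏ i, b (e (σ i)) i) = ∏ i, M (σ i) i := rfl
    rw [hc, hb]
    ring
  rw [Finset.sum_congr rfl (fun σ _ => step σ), ← Finset.mul_sum, ← Matrix.det_apply',
    htrans, Matrix.det_transpose]
  ring

open Finset in
theorem cauchyBinet {k n : ℕ} (c : Fin n → ℂ) (b : Fin n → Fin k → ℂ) :
    (Matrix.of fun i l : Fin k => ∑ j, c j * b j i * b j l).det
    = ∑ s ∈ ((Finset.univ : Finset (Fin n)).powersetCard k).attach,
        (Matrix.of fun i l : Fin k =>
            b (s.1.orderEmbOfFin ((Finset.mem_powersetCard.mp s.2).2) l) i).det ^ 2 *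
          ∏ l : Fin k, c (s.1.orderEmbOfFin ((Finset.mem_powersetCard.mp s.2).2) l) := by
  classical
  rw [cb_expand]
  have hsplit : ∑ g : Fin k → Fin n,
      (∏ i, c (g i) * b (g i) i) * (Matrix.of fun i l => b (g i) l).det
      = ∑ g ∈ Finset.univ.filter (fun g : Fin k → Fin n => Function.Injective g),
        (∏ i, c (g i) * b (g i) i) * (Matrix.of fun i l => b (g i) l).det := by
    symm
    apply Finset.sum_filter_of_ne
    intro g _ hne
    by_contra hni
    apply hne
    simp only [Function.Injective, not_forall] at hni
    obtain ⟨i1, i2, heq, hne12⟩ := hni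
    have : (Matrix.of fun i l => b (g i) l).det = 0 := by
      apply Matrix.det_zero_of_row_eq hne12
      funext l
      simp [heq]
    rw [this, mul_zero]
  rw [hsplit, cb_bij (fun g => (∏ i, c (g i) * b (g i) i) * (Matrix.of fun i l => b (g i) l).det),
    Finset.sum_product]
  exact Finset.sum_congr rfl fun s _ => cb_inner c b s.1 ((Finset.mem_powersetCard.mp s.2).2)

/-- The symmetric bilinear expression
`S(t1,t2) = ∑_{{j₁,…,j_k}⊆J} D(j₁,…,j_k)² ∏ a_{j_l}/(f_{j_l}(t1) f_{j_l}(t2))`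
evaluated on the diagonal equals `(-1)^k det Hess(log Φ)(t)`. -/
theorem stmt3 {k n : ℕ} (b0 : Fin n → ℂ) (b : Fin n → Fin k → ℂ) (a : Fin n → ℂ)
    (f : Fin n → (Fin k → ℂ) → ℂ)
    (hf : ∀ j s, f j s = b0 j + ∑ m, b j m * s m)
    (S : (Fin k → ℂ) → (Fin k → ℂ) → ℂ)
    (hS : ∀ t1 t2, S t1 t2 =
      ∑ s ∈ ((Finset.univ : Finset (Fin n)).powersetCard k).attach,
        (Matrix.of fun i l : Fin k =>
            b (s.1.orderEmbOfFin ((Finset.mem_powersetCard.mp s.2).2) l) i).det ^ 2 *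
          ∏ l : Fin k,
            a (s.1.orderEmbOfFin ((Finset.mem_powersetCard.mp s.2).2) l) /
              (f (s.1.orderEmbOfFin ((Finset.mem_powersetCard.mp s.2).2) l) t1 *
               f (s.1.orderEmbOfFin ((Finset.mem_powersetCard.mp s.2).2) l) t2))
    (t : Fin k → ℂ) (hft : ∀ j, f j t ≠ 0) :
    S t t = (-1 : ℂ) ^ k *
      (Matrix.of fun i l : Fin k => -∑ j, a j * (b j i * b j l) / (f j t) ^ 2).det := by
  set c : Fin n → ℂ := fun j => a j / (f j t) ^ 2 with hc
  have hneg : (Matrix.of fun i l : Fin k => -∑ j, a j * (b j i * b j l) / (f j t) ^ 2)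
      = -(Matrix.of fun i l : Fin k => ∑ j, c j * b j i * b j l) := by
    funext i l
    simp only [Matrix.of_apply, Matrix.neg_apply, neg_inj]
    exact Finset.sum_congr rfl fun j _ => by rw [hc]; ring
  rw [hneg, Matrix.det_neg, Fintype.card_fin]
  rw [← mul_assoc, ← mul_pow]
  norm_num
  rw [cauchyBinet c b, hS]
  refine Finset.sum_congr rfl fun s _ => ?_
  congr 1
  refine Finset.prod_congr rfl fun l _ => ?_
  rw [hc]
  ring
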